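/- Let 0 < α < β < ∞ and let b̄ : ℝ → ℝ be continuous, nonnegative, with b̄(a) = 0 for a ∉ [α,β]; set r = ∫_α^β b̄(c) dc. Let B : [0,∞) → ℝ be nonnegative and satisfy B(t) = ∫_α^β b̄(c)·B(t−c) dc for all t ≥ β. (i) If r > 1 and there is c₁ > 0 with B(s) ≥ c₁ for all s ∈ [0,β], then B(t) → ∞ as t → ∞. (ii) If r < 1 and B is bounded on [0,β], then B(t) → 0 as t → ∞. Consequently, for every a ∈ [0,β], n(a,t) = π(a)·B(t−a) tends to ∞ in case (i) and to 0 in case (ii) as t → ∞. -/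

import Mathlib

open MeasureTheory Real Set Filter

/-- Theorem 3.5 b,c: for the nonnegative solution `B` of the
homogeneous renewal equation `B(t) = ∫_α^β b̄(c)·B(t−c) dc` (`t ≥ β`), with
Lotka growth rate `r = ∫_α^β b̄`:
(i) if `r > 1` and `B ≥ c₁ > 0` on `[0,β]`, then `B(t) → ∞`, and for every
`a ∈ [0,β]`, `n(a,t) = π(a)·B(t−a) → ∞` as `t → ∞`;
(ii) if `r < 1` and `B` is bounded on `[0,β]`, then `B(t) → 0`, and for every
`a ∈ [0,β]`, `n(a,t) = π(a)·B(t−a) → 0` as `t → ∞`. -/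
theorem renewal_blowup_or_extinction
    (α β : ℝ) (hα : 0 < α) (hαβ : α < β)
    (bbar : ℝ → ℝ) (hbc : Continuous bbar) (hb0 : ∀ a, 0 ≤ bbar a)
    (hbsupp : ∀ a, a ∉ Set.Icc α β → bbar a = 0)
    (r : ℝ) (hr : r = ∫ c in α..β, bbar c)
    (μ : ℝ → ℝ) (hμc : Continuous μ) (hμ0 : ∀ x, 0 ≤ μ x)
    (pi : ℝ → ℝ) (hpi : ∀ a, pi a = Real.exp (-(∫ s in (0:ℝ)..a, μ s)))
    (B : ℝ → ℝ) (hBcont : ContinuousOn B (Set.Ici 0))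
    (hBnonneg : ∀ t : ℝ, 0 ≤ t → 0 ≤ B t)
    (hB : ∀ t : ℝ, β ≤ t → B t = ∫ c in α..β, bbar c * B (t - c)) :
    (1 < r → ∀ c₁ : ℝ, 0 < c₁ → (∀ s ∈ Set.Icc (0:ℝ) β, c₁ ≤ B s) →
      Filter.Tendsto B Filter.atTop Filter.atTop ∧
      ∀ a ∈ Set.Icc (0:ℝ) β,
        Filter.Tendsto (fun t => pi a * B (t - a)) Filter.atTop Filter.atTop) ∧
    (r < 1 → ∀ c₂ : ℝ, (∀ s ∈ Set.Icc (0:ℝ) β, B s ≤ c₂) →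
      Filter.Tendsto B Filter.atTop (nhds 0) ∧
      ∀ a ∈ Set.Icc (0:ℝ) β,
        Filter.Tendsto (fun t => pi a * B (t - a)) Filter.atTop (nhds 0)) := by
  have hαβ' : α ≤ β := hαβ.le
  have hβ0 : (0:ℝ) < β := hα.trans hαβ
  have hr0 : 0 ≤ r := by
    rw [hr]; exact intervalIntegral.integral_nonneg hαβ' (fun c _ => hb0 c)
  have hint2 : ∀ t : ℝ, β ≤ t →
      IntervalIntegrable (fun c => bbar c * B (t - c)) volume α β := by
    intro t ht
    apply ContinuousOn.intervalIntegrable_of_Icc hαβ'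
    apply hbc.continuousOn.mul
    apply hBcont.comp ((continuous_const.sub continuous_id).continuousOn)
    intro c hc
    simp only [mem_Ici, id, Pi.sub_apply]
    have := hc.2
    linarith
  have key_low : ∀ (m t : ℝ), β ≤ t →
      (∀ u, t - β ≤ u → u ≤ t - α → m ≤ B u) → m * r ≤ B t := by
    intro m t ht hu
    rw [hB t ht, hr, ← intervalIntegral.integral_const_mul]
    apply intervalIntegral.integral_mono_on hαβ'
      ((continuous_const.mul hbc).intervalIntegrable α β) (hint2 t ht)
    intro c hc
    rw [mul_comm]
    exact mul_le_mul_of_nonneg_left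
      (hu (t - c) (by linarith [hc.2]) (by linarith [hc.1])) (hb0 c)
  have key_high : ∀ (m t : ℝ), β ≤ t →
      (∀ u, t - β ≤ u → u ≤ t - α → B u ≤ m) → B t ≤ m * r := by
    intro m t ht hu
    rw [hB t ht, hr, ← intervalIntegral.integral_const_mul]
    apply intervalIntegral.integral_mono_on hαβ' (hint2 t ht)
      ((continuous_const.mul hbc).intervalIntegrable α β)
    intro c hc
    simp only [Pi.mul_apply]; rw [mul_comm m (bbar c)]
    exact mul_le_mul_of_nonneg_left
      (hu (t - c) (by linarith [hc.2]) (by linarith [hc.1])) (hb0 c)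
  have hshift : ∀ a : ℝ, Tendsto (fun t : ℝ => t - a) atTop atTop := by
    intro a
    simpa [sub_eq_add_neg] using tendsto_atTop_add_const_right atTop (-a) tendsto_id
  constructor
  · intro hr1 c₁ hc₁ hlow
    have lowA : ∀ n : ℕ, ∀ s : ℝ, 0 ≤ s → s ≤ β + n * α → c₁ ≤ B s := by
      intro n
      induction n with
      | zero => intro s hs0 hs; exact hlow s ⟨hs0, by simpa using hs⟩
      | succ n ih =>
        intro s hs0 hs
        by_cases hcase : s ≤ β + n * α
        · exact ih s hs0 hcase
        · push_neg at hcase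
          have hsβ : β ≤ s := by
            have : (0:ℝ) ≤ (n:ℝ) * α := by positivity
            linarith
          have h1 : c₁ ≤ c₁ * r := le_mul_of_one_le_right hc₁.le hr1.le
          refine h1.trans (key_low c₁ s hsβ ?_)
          intro u hu1 hu2
          push_cast at hs
          exact ih u (by linarith) (by linarith)
    have lowAll : ∀ s : ℝ, 0 ≤ s → c₁ ≤ B s := by
      intro s hs
      obtain ⟨n, hn⟩ := exists_nat_ge (s / α)
      have hsn : s ≤ n * α := by
        rw [div_le_iff₀ hα] at hn; linarith
      exact lowA n s hs (by linarith)
    have lowB : ∀ n : ℕ, ∀ s : ℝ, (n : ℝ) * β ≤ s → c₁ * r ^ n ≤ B s := by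
      intro n
      induction n with
      | zero => intro s hs; simpa using lowAll s (by simpa using hs)
      | succ n ih =>
        intro s hs
        push_cast at hs
        have hnβ : (0:ℝ) ≤ (n:ℝ) * β := by positivity
        have hsβ : β ≤ s := by linarith
        have hE : c₁ * r ^ (n + 1) = (c₁ * r ^ n) * r := by ring
        rw [hE]
        apply key_low (c₁ * r ^ n) s hsβ
        intro u hu1 hu2
        exact ih u (by linarith)
    have htB : Tendsto B atTop atTop := by
      rw [tendsto_atTop]
      intro M
      have hpow : Tendsto (fun n : ℕ => c₁ * r ^ n) atTop atTop :=
        (tendsto_pow_atTop_atTop_of_one_lt hr1).const_mul_atTop hc₁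
      obtain ⟨n, hn⟩ := (hpow.eventually_ge_atTop M).exists
      filter_upwards [eventually_ge_atTop ((n:ℝ) * β)] with t ht
      exact hn.trans (lowB n t ht)
    refine ⟨htB, fun a _ => ?_⟩
    have hpia : 0 < pi a := by rw [hpi]; exact Real.exp_pos _
    exact (htB.comp (hshift a)).const_mul_atTop hpia
  · intro hr1 c₂ hupp
    have hc₂0 : 0 ≤ c₂ := (hBnonneg 0 le_rfl).trans (hupp 0 ⟨le_rfl, hβ0.le⟩)
    have highA : ∀ n : ℕ, ∀ s : ℝ, 0 ≤ s → s ≤ β + n * α → B s ≤ c₂ := by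
      intro n
      induction n with
      | zero => intro s hs0 hs; exact hupp s ⟨hs0, by simpa using hs⟩
      | succ n ih =>
        intro s hs0 hs
        by_cases hcase : s ≤ β + n * α
        · exact ih s hs0 hcase
        · push_neg at hcase
          have : (0:ℝ) ≤ (n:ℝ) * α := by positivity
          have hsβ : β ≤ s := by linarith
          have h2 : c₂ * r ≤ c₂ := mul_le_of_le_one_right hc₂0 hr1.le
          refine (key_high c₂ s hsβ ?_).trans h2
          intro u hu1 hu2
          push_cast at hs
          exact ih u (by linarith) (by linarith)
    have highAll : ∀ s : ℝ, 0 ≤ s → B s ≤ c₂ := by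
      intro s hs
      obtain ⟨n, hn⟩ := exists_nat_ge (s / α)
      have hsn : s ≤ n * α := by
        rw [div_le_iff₀ hα] at hn; linarith
      exact highA n s hs (by linarith)
    have highB : ∀ n : ℕ, ∀ s : ℝ, (n : ℝ) * β ≤ s → B s ≤ c₂ * r ^ n := by
      intro n
      induction n with
      | zero => intro s hs; simpa using highAll s (by simpa using hs)
      | succ n ih =>
        intro s hs
        push_cast at hs
        have hnβ : (0:ℝ) ≤ (n:ℝ) * β := by positivity
        have hsβ : β ≤ s := by linarith
        have hE : c₂ * r ^ (n + 1) = (c₂ * r ^ n) * r := by ring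
        rw [hE]
        apply key_high (c₂ * r ^ n) s hsβ
        intro u hu1 hu2
        exact ih u (by linarith)
    have htB0 : Tendsto B atTop (nhds 0) := by
      rw [Metric.tendsto_atTop]
      intro ε hε
      have hpow : Tendsto (fun n : ℕ => c₂ * r ^ n) atTop (nhds 0) := by
        have := (tendsto_pow_atTop_nhds_zero_of_lt_one hr0 hr1).const_mul c₂
        simpa using this
      obtain ⟨n, hn⟩ := (hpow.eventually_lt_const hε).exists
      refine ⟨(n:ℝ) * β, fun t ht => ?_⟩
      have ht0 : (0:ℝ) ≤ t := le_trans (by positivity) ht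
      rw [Real.dist_eq, sub_zero, abs_of_nonneg (hBnonneg t ht0)]
      exact lt_of_le_of_lt (highB n t ht) hn
    refine ⟨htB0, fun a _ => ?_⟩
    have := (htB0.comp (hshift a)).const_mul (pi a)
    simpa using this
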